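/- (Theorem 3.1(i), common objective value at cluster points) There exists ζ ∈ ℝ such that F(x*, 0) = ζ for every cluster point x* of {x^k}; moreover ζ = lim_{k→∞} F(x^k, ε^k). -/

import Mathlib

open Filter
open scoped BigOperators InnerProductSpace

noncomputable section

/-- Real n-dimensional Euclidean space. -/
abbrev Vec (n : ℕ) := EuclideanSpace ℝ (Fin n)

/-- The smoothed objective `F(x, ε) = f(x) + λ ∑ᵢ (|xᵢ| + εᵢ)^p`. -/
def Fobj (n : ℕ) (p lam : ℝ) (f : Vec n → ℝ) (z : Vec n) (ε : Fin n → ℝ) : ℝ :=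
  f z + lam * ∑ i, (|z i| + ε i) ^ p

/-- The merit function `ψ(x, y, ε) = F(x, ε) + (β/2)‖x − y‖²`. -/
def psiObj (n : ℕ) (p lam β : ℝ) (f : Vec n → ℝ) (z y : Vec n) (ε : Fin n → ℝ) : ℝ :=
  Fobj n p lam f z ε + β / 2 * ‖z - y‖ ^ 2

/-- The weighted-ℓ₁ subproblem objective at iteration `k`:
`⟨∇f(yₖ), z⟩ + (β/2)‖z − yₖ‖² + λ ∑ᵢ wᵢᵏ |zᵢ|` with `wᵢᵏ = p(|xᵢᵏ| + εᵢᵏ)^{p−1}`. -/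
def subObj (n : ℕ) (p lam β : ℝ) (f : Vec n → ℝ) (xk yk : Vec n) (εk : Fin n → ℝ)
    (z : Vec n) : ℝ :=
  ⟪gradient f yk, z⟫_ℝ + β / 2 * ‖z - yk‖ ^ 2
    + lam * ∑ i, (p * (|xk i| + εk i) ^ (p - 1)) * |z i|

/-- All the hypotheses of the EIRL1 algorithm (Algorithm 1) together with
Assumption 2.1.  The convention `x⁻¹ = x⁰` is encoded through truncated
subtraction on ℕ (`x (k-1) = x 0` for `k = 0`). -/
structure EIRL1 (n : ℕ) (p lam β Lf μ αbar : ℝ) (f : Vec n → ℝ)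
    (x y : ℕ → Vec n) (ε : ℕ → Fin n → ℝ) (α : ℕ → ℝ) : Prop where
  hn : 1 ≤ n
  hp0 : 0 < p
  hp1 : p < 1
  hlam : 0 < lam
  hμ0 : 0 < μ
  hμ1 : μ < 1
  hLf : 0 ≤ Lf
  hβ : Lf < β
  hconv : ConvexOn ℝ Set.univ f
  hdiff : ContDiff ℝ 1 f
  hlip : ∀ a b, ‖gradient f a - gradient f b‖ ≤ Lf * ‖a - b‖
  hαbar0 : 0 ≤ αbar
  hαbar1 : αbar < 1
  hα0 : ∀ k, 0 ≤ α k
  hα1 : ∀ k, α k ≤ αbar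
  hε0 : ∀ i, 0 < ε 0 i
  hεpos : ∀ k i, 0 < ε (k + 1) i
  hεdec : ∀ k i, ε (k + 1) i ≤ μ * ε k i
  hy : ∀ k, y k = x k + α k • (x k - x (k - 1))
  hmin : ∀ k z, z ≠ x (k + 1) →
    subObj n p lam β f (x k) (y k) (ε k) (x (k + 1)) < subObj n p lam β f (x k) (y k) (ε k) z
  hlevel : Bornology.IsBounded {z : Vec n | Fobj n p lam f z 0 ≤ Fobj n p lam f (x 0) (ε 0)}

-- line derivative
lemma line_hasDerivAt {n : ℕ} {f : Vec n → ℝ} (hf : ContDiff ℝ 1 f) (a v : Vec n) (t : ℝ) :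
    HasDerivAt (fun s : ℝ => f (a + s • v)) ⟪gradient f (a + t • v), v⟫_ℝ t := by
  have hd : DifferentiableAt ℝ f (a + t • v) :=
    (hf.differentiable one_ne_zero).differentiableAt
  have hg : HasFDerivAt f ((InnerProductSpace.toDual ℝ (Vec n)) (gradient f (a + t • v))) (a + t • v) :=
    hasGradientAt_iff_hasFDerivAt.mp hd.hasGradientAt
  have hc : HasDerivAt (fun s : ℝ => a + s • v) v t := by
    simpa using ((hasDerivAt_id t).smul_const v).const_add a
  have h := hg.comp_hasDerivAt t hc
  rw [← InnerProductSpace.toDual_apply_apply]; exact h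

-- parallelogram-type identity
lemma norm_combo {n : ℕ} (u v : Vec n) (t : ℝ) :
    ‖(1 - t) • u + t • v‖ ^ 2
      = (1 - t) * ‖u‖ ^ 2 + t * ‖v‖ ^ 2 - t * (1 - t) * ‖u - v‖ ^ 2 := by
  have h1 := norm_add_sq_real ((1 - t) • u) (t • v)
  have h2 := norm_sub_sq_real u v
  have h3 : ⟪(1 - t) • u, t • v⟫_ℝ = (1 - t) * t * ⟪u, v⟫_ℝ := by
    rw [real_inner_smul_left, real_inner_smul_right]; ring
  have h4 : ‖(1 - t) • u‖ ^ 2 = (1 - t) ^ 2 * ‖u‖ ^ 2 := by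
    rw [norm_smul, Real.norm_eq_abs, mul_pow, sq_abs]
  have h5 : ‖t • v‖ ^ 2 = t ^ 2 * ‖v‖ ^ 2 := by
    rw [norm_smul, Real.norm_eq_abs, mul_pow, sq_abs]
  rw [h1, h3, h4, h5, h2]; ring

-- descent lemma
lemma descent_lemma {n : ℕ} {f : Vec n → ℝ} {Lf : ℝ} (hf : ContDiff ℝ 1 f)
    (hlip : ∀ a b : Vec n, ‖gradient f a - gradient f b‖ ≤ Lf * ‖a - b‖)
    (a b : Vec n) :
    f b ≤ f a + ⟪gradient f a, b - a⟫_ℝ + Lf / 2 * ‖b - a‖ ^ 2 := by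
  set v := b - a with hv
  set G : ℝ → ℝ := fun t => f (a + t • v) - t * ⟪gradient f a, v⟫_ℝ - Lf * ‖v‖ ^ 2 * t ^ 2 / 2
    with hG
  have hGd : ∀ t : ℝ, HasDerivAt G
      (⟪gradient f (a + t • v), v⟫_ℝ - ⟪gradient f a, v⟫_ℝ - Lf * ‖v‖ ^ 2 * t) t := by
    intro t
    have h1 := line_hasDerivAt hf a v t
    have h2 : HasDerivAt (fun t : ℝ => t * ⟪gradient f a, v⟫_ℝ) ⟪gradient f a, v⟫_ℝ t := by
      simpa using (hasDerivAt_id t).mul_const ⟪gradient f a, v⟫_ℝ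
    have h3 : HasDerivAt (fun t : ℝ => Lf * ‖v‖ ^ 2 * t ^ 2 / 2) (Lf * ‖v‖ ^ 2 * t) t := by
      have := ((hasDerivAt_pow 2 t).const_mul (Lf * ‖v‖ ^ 2)).div_const 2
      refine this.congr_deriv ?_
      norm_num
      ring
    exact (h1.sub h2).sub h3
  have hanti : G 1 ≤ G 0 := by
    have hmono : AntitoneOn G (Set.Icc (0:ℝ) 1) := by
      apply antitoneOn_of_deriv_nonpos (convex_Icc 0 1)
      · exact (Differentiable.continuous fun t => (hGd t).differentiableAt).continuousOn
      · intro t ht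
        exact (hGd t).differentiableAt.differentiableWithinAt
      · intro t ht
        rw [interior_Icc] at ht
        rw [(hGd t).deriv]
        have hib : ⟪gradient f (a + t • v) - gradient f a, v⟫_ℝ
            ≤ ‖gradient f (a + t • v) - gradient f a‖ * ‖v‖ := real_inner_le_norm _ _
        have hlb : ‖gradient f (a + t • v) - gradient f a‖ ≤ Lf * (t * ‖v‖) := by
          have := hlip (a + t • v) a
          simpa [norm_smul, abs_of_nonneg (le_of_lt ht.1)] using this
        have hvn : (0:ℝ) ≤ ‖v‖ := norm_nonneg _
        have := hib.trans (by nlinarith [mul_le_mul_of_nonneg_right hlb hvn] :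
          ‖gradient f (a + t • v) - gradient f a‖ * ‖v‖ ≤ Lf * ‖v‖ ^ 2 * t)
        rw [inner_sub_left] at this
        linarith
    exact hmono (by norm_num) (by norm_num) (by norm_num)
  have e0 : G 0 = f a := by simp [hG]
  have e1 : G 1 = f b - ⟪gradient f a, v⟫_ℝ - Lf * ‖v‖ ^ 2 / 2 := by
    simp [hG, hv]
  rw [e0, e1] at hanti
  have : ‖v‖ ^ 2 = ‖b - a‖ ^ 2 := by rw [hv]
  linarith

-- convex gradient inequality
lemma convex_grad_le {n : ℕ} {f : Vec n → ℝ} (hf : ContDiff ℝ 1 f)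
    (hc : ConvexOn ℝ Set.univ f) (a b : Vec n) :
    f a + ⟪gradient f a, b - a⟫_ℝ ≤ f b := by
  set g : ℝ → ℝ := fun t => f (a + t • (b - a)) with hg
  have hconv : ConvexOn ℝ Set.univ g := by
    have hA : ConvexOn ℝ ((AffineMap.lineMap a b : ℝ →ᵃ[ℝ] Vec n) ⁻¹' Set.univ)
        (f ∘ (AffineMap.lineMap a b : ℝ →ᵃ[ℝ] Vec n)) := hc.comp_affineMap _
    have : (f ∘ (AffineMap.lineMap a b : ℝ →ᵃ[ℝ] Vec n)) = g := by
      funext t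
      simp [hg, AffineMap.lineMap_apply, add_comm]
    rwa [Set.preimage_univ, this] at hA
  have hD : HasDerivAt g ⟪gradient f a, b - a⟫_ℝ 0 := by
    have := line_hasDerivAt hf a (b - a) 0
    simpa using this
  have hslope := hconv.le_slope_of_hasDerivAt (Set.mem_univ (0:ℝ)) (Set.mem_univ (1:ℝ))
    zero_lt_one hD
  have hs : slope g 0 1 = g 1 - g 0 := by
    simp [slope_def_field]
  rw [hs] at hslope
  have hg0 : g 0 = f a := by simp [hg]
  have hg1 : g 1 = f b := by simp [hg]
  rw [hg0, hg1] at hslope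
  linarith

-- concavity tangent inequality for rpow
lemma rpow_tangent {p : ℝ} (hp0 : 0 < p) (hp1 : p < 1) {t s : ℝ} (ht : 0 < t) (hs : 0 ≤ s) :
    s ^ p ≤ t ^ p + p * t ^ (p - 1) * (s - t) := by
  have hconc : ConcaveOn ℝ (Set.Ici (0:ℝ)) (fun x : ℝ => x ^ p) :=
    Real.concaveOn_rpow hp0.le hp1.le
  have hD : HasDerivAt (fun x : ℝ => x ^ p) (p * t ^ (p - 1)) t :=
    Real.hasDerivAt_rpow_const (Or.inl (ne_of_gt ht))
  rcases lt_trichotomy s t with h | h | h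
  · -- s < t : use slope_le_of_hasDerivAt at right endpoint?  deriv at t, secant s t
    have := hconc.le_slope_of_hasDerivAt (Set.mem_Ici.2 hs) (Set.mem_Ici.2 ht.le) h hD
    rw [slope_def_field] at this
    have hst : (0:ℝ) < t - s := by linarith
    rw [le_div_iff₀ hst] at this
    nlinarith
  · subst h; simp
  · have := hconc.slope_le_of_hasDerivAt (Set.mem_Ici.2 ht.le) (Set.mem_Ici.2 (by linarith : (0:ℝ) ≤ s)) h hD
    have hst : (0:ℝ) < s - t := by linarith
    rw [slope_def_field, div_le_iff₀ hst] at this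
    nlinarith

-- subadditivity of rpow on nonneg reals
lemma rpow_add_le {p : ℝ} (hp0 : 0 < p) (hp1 : p < 1) {a b : ℝ} (ha : 0 ≤ a) (hb : 0 ≤ b) :
    (a + b) ^ p ≤ a ^ p + b ^ p := by
  have h := NNReal.rpow_add_le_add_rpow a.toNNReal b.toNNReal hp0.le hp1.le
  have h2 := NNReal.coe_le_coe.2 h
  push_cast [NNReal.coe_rpow] at h2
  rwa [Real.coe_toNNReal a ha, Real.coe_toNNReal b hb] at h2

lemma strong_min {n : ℕ} {p lam β : ℝ} {f : Vec n → ℝ} {xk yk : Vec n} {εk : Fin n → ℝ}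
    (hβ : 0 < β) (hlam : 0 ≤ lam) (hw : ∀ i, 0 ≤ p * (|xk i| + εk i) ^ (p - 1))
    {m : Vec n} (hm : ∀ z, subObj n p lam β f xk yk εk m ≤ subObj n p lam β f xk yk εk z)
    (z : Vec n) :
    subObj n p lam β f xk yk εk m + β / 2 * ‖z - m‖ ^ 2 ≤ subObj n p lam β f xk yk εk z := by
  set S := subObj n p lam β f xk yk εk with hS
  set c := ‖z - m‖ ^ 2 with hc
  have key : ∀ t ∈ Set.Ioc (0:ℝ) 1, S m + β / 2 * ((1 - t) * c) ≤ S z := by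
    rintro t ⟨ht0, ht1⟩
    set mt : Vec n := (1 - t) • m + t • z with hmt
    have hcomb : S mt ≤ (1 - t) * S m + t * S z - β / 2 * (t * (1 - t) * c) := by
      have hinner : ⟪gradient f yk, mt⟫_ℝ
          = (1 - t) * ⟪gradient f yk, m⟫_ℝ + t * ⟪gradient f yk, z⟫_ℝ := by
        rw [hmt, inner_add_right, real_inner_smul_right, real_inner_smul_right]
      have hquad : ‖mt - yk‖ ^ 2
          = (1 - t) * ‖m - yk‖ ^ 2 + t * ‖z - yk‖ ^ 2 - t * (1 - t) * c := by
        have h1 : mt - yk = (1 - t) • (m - yk) + t • (z - yk) := by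
          rw [hmt]; module
        rw [h1, norm_combo]
        have h2 : (m - yk) - (z - yk) = m - z := by abel
        rw [h2, norm_sub_rev m z, hc]
      have habs : ∀ i, (p * (|xk i| + εk i) ^ (p - 1)) * |mt i|
          ≤ (1 - t) * ((p * (|xk i| + εk i) ^ (p - 1)) * |m i|)
            + t * ((p * (|xk i| + εk i) ^ (p - 1)) * |z i|) := by
        intro i
        have hmti : mt i = (1 - t) * m i + t * z i := by
          simp [hmt, smul_eq_mul]
        have : |mt i| ≤ (1 - t) * |m i| + t * |z i| := by
          rw [hmti]
          calc |(1 - t) * m i + t * z i| ≤ |(1 - t) * m i| + |t * z i| := abs_add_le _ _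
            _ = (1 - t) * |m i| + t * |z i| := by
                rw [abs_mul, abs_mul, abs_of_nonneg (by linarith), abs_of_nonneg ht0.le]
        nlinarith [hw i, abs_nonneg (m i), abs_nonneg (z i)]
      have hsum : ∑ i, (p * (|xk i| + εk i) ^ (p - 1)) * |mt i|
          ≤ (1 - t) * (∑ i, (p * (|xk i| + εk i) ^ (p - 1)) * |m i|)
            + t * (∑ i, (p * (|xk i| + εk i) ^ (p - 1)) * |z i|) := by
        rw [Finset.mul_sum, Finset.mul_sum, ← Finset.sum_add_distrib]
        exact Finset.sum_le_sum fun i _ => by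
          simpa using habs i
      simp only [hS, subObj]
      rw [hinner]
      nlinarith [hsum, hquad]
    have hmm := (hm mt).trans hcomb
    have h3 : 0 ≤ t * (S z - (S m + β / 2 * ((1 - t) * c))) := by nlinarith
    have h4 := (mul_nonneg_iff_of_pos_left ht0).mp h3
    linarith
  have hlim : Tendsto (fun t : ℝ => S m + β / 2 * ((1 - t) * c)) (nhdsWithin 0 (Set.Ioi 0))
      (nhds (S m + β / 2 * c)) := by
    have hcont : Continuous (fun t : ℝ => S m + β / 2 * ((1 - t) * c)) := by
      continuity
    have := hcont.tendsto 0
    simp only [sub_zero, one_mul] at this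
    exact this.mono_left nhdsWithin_le_nhds
  refine le_of_tendsto hlim ?_
  filter_upwards [Ioc_mem_nhdsGT_of_mem (Set.mem_Ico.2 ⟨le_refl 0, zero_lt_one⟩)] with t ht
  exact key t ht

lemma key_ineq {n : ℕ} {p lam β Lf : ℝ} {f : Vec n → ℝ}
    (hp0 : 0 < p) (hp1 : p < 1) (hlam : 0 < lam) (hLf : 0 ≤ Lf) (hβ : Lf < β)
    (hconv : ConvexOn ℝ Set.univ f) (hdiff : ContDiff ℝ 1 f)
    (hlip : ∀ a b, ‖gradient f a - gradient f b‖ ≤ Lf * ‖a - b‖)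
    {X X' Y : Vec n} {E E' : Fin n → ℝ}
    (hE : ∀ i, 0 < E i) (hE' : ∀ i, 0 ≤ E' i) (hEE : ∀ i, E' i ≤ E i)
    (hmin : ∀ z, subObj n p lam β f X Y E X' ≤ subObj n p lam β f X Y E z) :
    Fobj n p lam f X' E' + β / 2 * ‖X' - X‖ ^ 2
      ≤ Fobj n p lam f X E + β / 2 * ‖X - Y‖ ^ 2 := by
  have hβ0 : 0 < β := lt_of_le_of_lt hLf hβ
  have hw : ∀ i, 0 ≤ p * (|X i| + E i) ^ (p - 1) := fun i =>
    mul_nonneg hp0.le (Real.rpow_nonneg (add_nonneg (abs_nonneg _) (hE i).le) _)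
  have hstrong := strong_min hβ0 hlam.le hw hmin X
  simp only [subObj] at hstrong
  set g := gradient f Y with hg
  have hdesc := descent_lemma hdiff hlip Y X'
  have hcx := convex_grad_le hdiff hconv Y X
  rw [← hg] at hdesc hcx
  -- rpow tangent inequality, termwise
  have hterm : ∀ i, (|X' i| + E' i) ^ p
      ≤ (|X i| + E i) ^ p + (p * (|X i| + E i) ^ (p - 1)) * |X' i|
        - (p * (|X i| + E i) ^ (p - 1)) * |X i| := by
    intro i
    have ht : 0 < |X i| + E i := add_pos_of_nonneg_of_pos (abs_nonneg _) (hE i)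
    have hs : 0 ≤ |X' i| + E' i := add_nonneg (abs_nonneg _) (hE' i)
    have h1 := rpow_tangent hp0 hp1 ht hs
    have h2 : (|X' i| + E' i) - (|X i| + E i) ≤ |X' i| - |X i| := by
      have := hEE i; linarith
    nlinarith [hw i, mul_le_mul_of_nonneg_left h2 (hw i)]
  have hsum : ∑ i, (|X' i| + E' i) ^ p
      ≤ ∑ i, (|X i| + E i) ^ p + ∑ i, (p * (|X i| + E i) ^ (p - 1)) * |X' i|
        - ∑ i, (p * (|X i| + E i) ^ (p - 1)) * |X i| := by
    have := Finset.sum_le_sum (fun i (_ : i ∈ Finset.univ) => hterm i)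
    simpa [Finset.sum_add_distrib, Finset.sum_sub_distrib] using this
  have hi1 : ⟪g, X' - Y⟫_ℝ = ⟪g, X'⟫_ℝ - ⟪g, Y⟫_ℝ := inner_sub_right _ _ _
  have hi2 : ⟪g, X - Y⟫_ℝ = ⟪g, X⟫_ℝ - ⟪g, Y⟫_ℝ := inner_sub_right _ _ _
  have hq1 : (0:ℝ) ≤ ‖X' - Y‖ ^ 2 := sq_nonneg _
  have hrn : ‖X - X'‖ ^ 2 = ‖X' - X‖ ^ 2 := by rw [norm_sub_rev]
  have hmul := mul_le_mul_of_nonneg_left hsum hlam.le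
  simp only [Fobj]
  rw [hi1] at hdesc
  rw [hi2] at hcx
  nlinarith [hstrong, hdesc, hcx, hmul, hq1, hrn,
    mul_le_mul_of_nonneg_right (le_of_lt hβ) hq1]

set_option maxHeartbeats 1000000 in
theorem stmt_main (n : ℕ) (p lam β Lf μ αbar : ℝ) (f : Vec n → ℝ)
    (x y : ℕ → Vec n) (ε : ℕ → Fin n → ℝ) (α : ℕ → ℝ)
    (hp0 : 0 < p) (hp1 : p < 1) (hlam : 0 < lam) (hμ0 : 0 < μ) (hμ1 : μ < 1)
    (hLf : 0 ≤ Lf) (hβ : Lf < β)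
    (hconv : ConvexOn ℝ Set.univ f) (hdiff : ContDiff ℝ 1 f)
    (hlip : ∀ a b, ‖gradient f a - gradient f b‖ ≤ Lf * ‖a - b‖)
    (hαbar0 : 0 ≤ αbar) (hαbar1 : αbar < 1)
    (hα0 : ∀ k, 0 ≤ α k) (hα1 : ∀ k, α k ≤ αbar)
    (hε0 : ∀ i, 0 < ε 0 i) (hεpos : ∀ k i, 0 < ε (k + 1) i)
    (hεdec : ∀ k i, ε (k + 1) i ≤ μ * ε k i)
    (hy : ∀ k, y k = x k + α k • (x k - x (k - 1)))
    (hmin : ∀ k z, z ≠ x (k + 1) →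
      subObj n p lam β f (x k) (y k) (ε k) (x (k + 1)) < subObj n p lam β f (x k) (y k) (ε k) z)
    (hlevel : Bornology.IsBounded {z : Vec n | Fobj n p lam f z 0 ≤ Fobj n p lam f (x 0) (ε 0)}) :
    ∃ ζ : ℝ,
      (∀ xstar : Vec n, MapClusterPt xstar atTop x → Fobj n p lam f xstar 0 = ζ) ∧
      Tendsto (fun k => Fobj n p lam f (x k) (ε k)) atTop (nhds ζ) := by
  have hβ0 : 0 < β := lt_of_le_of_lt hLf hβ
  have hεp : ∀ k i, 0 < ε k i := by
    intro k i
    cases k with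
    | zero => exact hε0 i
    | succ k => exact hεpos k i
  set F : ℕ → ℝ := fun k => Fobj n p lam f (x k) (ε k) with hF
  set d : ℕ → ℝ := fun k => ‖x k - x (k - 1)‖ with hd
  -- key recursion
  have key : ∀ k, F (k + 1) + β / 2 * d (k + 1) ^ 2 ≤ F k + β / 2 * (αbar ^ 2 * d k ^ 2) := by
    intro k
    have hmin' : ∀ z, subObj n p lam β f (x k) (y k) (ε k) (x (k + 1))
        ≤ subObj n p lam β f (x k) (y k) (ε k) z := by
      intro z
      by_cases hz : z = x (k + 1)
      · rw [hz]
      · exact (hmin k z hz).le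
    have hEE : ∀ i, ε (k + 1) i ≤ ε k i := by
      intro i
      have := hεdec k i
      nlinarith [hεp k i]
    have hk := key_ineq hp0 hp1 hlam hLf hβ hconv hdiff hlip (hεp k)
      (fun i => (hεp (k + 1) i).le) hEE hmin'
    have hd1 : d (k + 1) = ‖x (k + 1) - x k‖ := by simp [hd]
    have hxy : ‖x k - y k‖ = α k * d k := by
      have h1 : x k - y k = -(α k • (x k - x (k - 1))) := by
        rw [hy k]; module
      rw [h1, norm_neg, norm_smul, Real.norm_eq_abs, abs_of_nonneg (hα0 k), hd]
    have hxy2 : ‖x k - y k‖ ^ 2 ≤ αbar ^ 2 * d k ^ 2 := by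
      rw [hxy, mul_pow]
      have : (α k) ^ 2 ≤ αbar ^ 2 := pow_le_pow_left₀ (hα0 k) (hα1 k) 2
      nlinarith [sq_nonneg (d k)]
    rw [hd1]
    have := hk
    nlinarith [hxy2]
  set δ : ℝ := β * (1 + αbar ^ 2) / 4 with hδ
  set cst : ℝ := β * (1 - αbar ^ 2) / 4 with hcst
  have hαsq : αbar ^ 2 < 1 := by nlinarith
  have hcst0 : 0 < cst := by rw [hcst]; nlinarith
  have hδ0 : 0 < δ := by rw [hδ]; nlinarith
  set Hs : ℕ → ℝ := fun k => F k + δ * d k ^ 2 with hHs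
  have hHmono : ∀ k, Hs (k + 1) + cst * d (k + 1) ^ 2 ≤ Hs k := by
    intro k
    have h1 := key k
    have h2 : 0 ≤ (δ - β * αbar ^ 2 / 2) * d k ^ 2 :=
      mul_nonneg (by rw [hδ]; nlinarith) (sq_nonneg _)
    have h3 : δ + cst = β / 2 := by rw [hδ, hcst]; ring
    simp only [hHs]
    nlinarith [sq_nonneg (d (k + 1))]
  have hHanti : Antitone Hs := antitone_nat_of_succ_le fun k => by
    nlinarith [hHmono k, mul_nonneg hcst0.le (sq_nonneg (d (k + 1)))]
  -- continuity of F(·,0)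
  have habs : ∀ i : Fin n, Continuous fun z : Vec n => |z i| + (0:ℝ) := by
    intro i
    exact (Continuous.abs (EuclideanSpace.proj (𝕜 := ℝ) i).continuous).add continuous_const
  have hcontF0 : Continuous fun z : Vec n => Fobj n p lam f z 0 := by
    simp only [Fobj]
    refine (hdiff.continuous).add (continuous_const.mul (continuous_finset_sum _ ?_))
    intro i _
    refine continuous_iff_continuousAt.2 fun z => ?_
    exact (Real.continuousAt_rpow_const _ p (Or.inr hp0.le)).comp ((habs i).continuousAt)
  -- F(z,0) ≤ F(z,e) for nonneg e
  have hFmono : ∀ (z : Vec n) (e : Fin n → ℝ), (∀ i, 0 ≤ e i) →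
      Fobj n p lam f z 0 ≤ Fobj n p lam f z e := by
    intro z e he
    simp only [Fobj, Pi.zero_apply]
    have h0 : ∀ i ∈ Finset.univ, (|z i| + (0:ℝ)) ^ p ≤ (|z i| + e i) ^ p := by
      intro i _
      exact Real.rpow_le_rpow (by positivity) (by linarith [he i]) hp0.le
    have hsum := Finset.sum_le_sum h0
    have := mul_le_mul_of_nonneg_left hsum hlam.le
    linarith
  -- level set compact, min of F(·,0)
  set Lset : Set (Vec n) := {z : Vec n | Fobj n p lam f z 0 ≤ Fobj n p lam f (x 0) (ε 0)}
    with hLset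
  have hLclosed : IsClosed Lset := isClosed_le hcontF0 continuous_const
  have hLcompact : IsCompact Lset := Metric.isCompact_of_isClosed_isBounded hLclosed hlevel
  have hx0mem : x 0 ∈ Lset := hFmono (x 0) (ε 0) fun i => (hε0 i).le
  obtain ⟨zmin, hzmem, hzmin⟩ := hLcompact.exists_isMinOn ⟨x 0, hx0mem⟩ hcontF0.continuousOn
  -- H bounded below
  have hHs0 : Hs 0 = F 0 := by
    simp [hHs, hd]
  have hFleH : ∀ k, F k ≤ Hs k := fun k => by
    simp only [hHs]
    nlinarith [mul_nonneg hδ0.le (sq_nonneg (d k))]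
  have hxkmem : ∀ k, x k ∈ Lset := by
    intro k
    have h1 : Fobj n p lam f (x k) 0 ≤ F k := hFmono (x k) (ε k) fun i => (hεp k i).le
    have h2 : Hs k ≤ Hs 0 := hHanti (Nat.zero_le k)
    rw [hHs0] at h2
    exact le_trans h1 (le_trans (hFleH k) h2)
  have hbddH : ∀ k, Fobj n p lam f zmin 0 ≤ Hs k := by
    intro k
    have h1 := (isMinOn_iff.mp hzmin) (x k) (hxkmem k)
    have h2 : Fobj n p lam f (x k) 0 ≤ F k := hFmono (x k) (ε k) fun i => (hεp k i).le
    exact le_trans h1 (le_trans h2 (hFleH k))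
  set ζ : ℝ := ⨅ k, Hs k with hζ
  have hHtend : Tendsto Hs atTop (nhds ζ) :=
    tendsto_atTop_ciInf hHanti ⟨Fobj n p lam f zmin 0, by rintro _ ⟨k, rfl⟩; exact hbddH k⟩
  -- d → 0
  have hdtend : Tendsto (fun k => d k ^ 2) atTop (nhds 0) := by
    have h1 : Tendsto (fun k => Hs k - Hs (k + 1)) atTop (nhds 0) := by
      have := hHtend.sub (hHtend.comp (tendsto_add_atTop_nat 1))
      simpa using this
    have h2 : Tendsto (fun k => cst * d (k + 1) ^ 2) atTop (nhds 0) := by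
      refine tendsto_of_tendsto_of_tendsto_of_le_of_le tendsto_const_nhds h1 ?_ ?_
      · intro k
        show (0:ℝ) ≤ cst * d (k + 1) ^ 2
        exact mul_nonneg hcst0.le (sq_nonneg _)
      · intro k
        show cst * d (k + 1) ^ 2 ≤ Hs k - Hs (k + 1)
        linarith [hHmono k]
    have h3 : Tendsto (fun k => d (k + 1) ^ 2) atTop (nhds 0) := by
      have := h2.const_mul cst⁻¹
      simp only [← mul_assoc, inv_mul_cancel₀ (ne_of_gt hcst0), one_mul, mul_zero] at this
      exact this
    exact (tendsto_add_atTop_iff_nat 1).mp h3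
  have hFtend : Tendsto F atTop (nhds ζ) := by
    have := hHtend.sub ((hdtend.const_mul δ))
    simp only [mul_zero, sub_zero] at this
    have heq : (fun k => Hs k - δ * d k ^ 2) = F := by
      funext k
      simp [hHs]
    rwa [heq] at this
  refine ⟨ζ, ?_, hFtend⟩
  -- cluster point part
  intro xstar hcl
  -- ε → 0 and the gap F k - F(x k, 0) → 0
  have hεbound : ∀ k i, ε k i ≤ μ ^ k * ε 0 i := by
    intro k
    induction k with
    | zero => intro i; simp
    | succ k ih =>
      intro i
      calc ε (k + 1) i ≤ μ * ε k i := hεdec k i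
        _ ≤ μ * (μ ^ k * ε 0 i) := by
            have := ih i
            nlinarith
        _ = μ ^ (k + 1) * ε 0 i := by ring
  have hεt : ∀ i, Tendsto (fun k => ε k i) atTop (nhds 0) := by
    intro i
    refine tendsto_of_tendsto_of_tendsto_of_le_of_le tendsto_const_nhds ?_
      (fun k => (hεp k i).le) (fun k => hεbound k i)
    have := (tendsto_pow_atTop_nhds_zero_of_lt_one hμ0.le hμ1).mul_const (ε 0 i)
    simpa using this
  have hgaptend : Tendsto (fun k => lam * ∑ i, (ε k i) ^ p) atTop (nhds 0) := by
    have hsum : Tendsto (fun k => ∑ i, (ε k i) ^ p) atTop (nhds 0) := by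
      have : Tendsto (fun k => ∑ i, (ε k i) ^ p) atTop (nhds (∑ i : Fin n, (0:ℝ))) := by
        refine tendsto_finset_sum _ fun i _ => ?_
        have hc := (Real.continuousAt_rpow_const 0 p (Or.inr hp0.le)).tendsto.comp (hεt i)
        simpa [Function.comp_def, Real.zero_rpow (ne_of_gt hp0)] using hc
      simpa using this
    simpa using hsum.const_mul lam
  have hgap : ∀ k, Fobj n p lam f (x k) 0 ≤ F k ∧
      F k ≤ Fobj n p lam f (x k) 0 + lam * ∑ i, (ε k i) ^ p := by
    intro k
    constructor
    · exact hFmono (x k) (ε k) fun i => (hεp k i).le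
    · simp only [hF, Fobj, Pi.zero_apply]
      have hterm : ∀ i ∈ Finset.univ, (|x k i| + ε k i) ^ p
          ≤ (|x k i| + (0:ℝ)) ^ p + (ε k i) ^ p := by
        intro i _
        have := rpow_add_le hp0 hp1 (abs_nonneg (x k i)) (hεp k i).le
        simpa using this
      have hsum := Finset.sum_le_sum hterm
      rw [Finset.sum_add_distrib] at hsum
      have := mul_le_mul_of_nonneg_left hsum hlam.le
      linarith
  have hF0tend : Tendsto (fun k => Fobj n p lam f (x k) 0) atTop (nhds ζ) := by
    refine tendsto_of_tendsto_of_tendsto_of_le_of_le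
      (g := fun k => F k - lam * ∑ i, (ε k i) ^ p) (h := F) ?_ hFtend ?_ ?_
    · have := hFtend.sub hgaptend
      simpa using this
    · intro k
      show F k - lam * ∑ i, (ε k i) ^ p ≤ Fobj n p lam f (x k) 0
      linarith [(hgap k).2]
    · intro k
      show Fobj n p lam f (x k) 0 ≤ F k
      exact (hgap k).1
  have hmcp : MapClusterPt (Fobj n p lam f xstar 0) atTop
      ((fun z => Fobj n p lam f z 0) ∘ x) := hcl.continuousAt_comp hcontF0.continuousAt
  have hle : map ((fun z => Fobj n p lam f z 0) ∘ x) atTop ≤ nhds ζ := hF0tend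
  exact eq_of_nhds_neBot (hmcp.clusterPt.mono hle)


/-- Theorem 3.1(i): `F` attains a common value `ζ` at every cluster point of
`{xᵏ}`, and `ζ = lim_k F(xᵏ, εᵏ)`. -/
theorem stmt_11 (n : ℕ) (p lam β Lf μ αbar : ℝ) (f : Vec n → ℝ)
    (x y : ℕ → Vec n) (ε : ℕ → Fin n → ℝ) (α : ℕ → ℝ)
    (H : EIRL1 n p lam β Lf μ αbar f x y ε α) :
    ∃ ζ : ℝ,
      (∀ xstar : Vec n, MapClusterPt xstar atTop x → Fobj n p lam f xstar 0 = ζ) ∧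
      Tendsto (fun k => Fobj n p lam f (x k) (ε k)) atTop (nhds ζ) := by
  obtain ⟨hn, hp0, hp1, hlam, hμ0, hμ1, hLf, hβ, hconv, hdiff, hlip, hαbar0, hαbar1,
    hα0, hα1, hε0, hεpos, hεdec, hy, hmin, hlevel⟩ := H
  exact stmt_main n p lam β Lf μ αbar f x y ε α hp0 hp1 hlam hμ0 hμ1 hLf hβ hconv hdiff hlip
    hαbar0 hαbar1 hα0 hα1 hε0 hεpos hεdec hy hmin hlevel
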